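/- For ℓ > 0 define T(ℓ) = (1/ℓ)·(π/2 − arctan(sinh(ℓ/2))). Then for every fixed t > 0 the geodesic curvature and length of the collar circles at parameter T(ℓ) − t satisfy: lim_{ℓ → 0⁺} sin(ℓ (T(ℓ) − t)) = 1 and lim_{ℓ → 0⁺} ℓ / cos(ℓ (T(ℓ) − t)) = 1/(t + ½). -/

import Mathlib

open Real Filter Topology

noncomputable section

/-- Half-length of the collar of a closed geodesic of length `ℓ`:
`T(ℓ) = (1/ℓ)·arccot(sinh(ℓ/2)) = (1/ℓ)·(π/2 − arctan(sinh(ℓ/2)))`. -/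
def collarT (l : ℝ) : ℝ := (1 / l) * (π / 2 - Real.arctan (Real.sinh (l / 2)))

/-- Asymptotics of geodesic curvature `sin(ℓt)` and length `ℓ/cos(ℓt)` of the collar circles
at parameter `t = ±(T(ℓ) − t)` as `ℓ → 0⁺`. -/
theorem stmt19 (t : ℝ) (ht : 0 < t) :
    Tendsto (fun l : ℝ => Real.sin (l * (collarT l - t))) (nhdsWithin 0 (Set.Ioi 0)) (nhds 1) ∧
    Tendsto (fun l : ℝ => l / Real.cos (l * (collarT l - t))) (nhdsWithin 0 (Set.Ioi 0))
      (nhds (1 / (t + 1 / 2))) := by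
  set x : ℝ → ℝ := fun l => Real.arctan (Real.sinh (l / 2)) + l * t with hxdef
  have hx0 : x 0 = 0 := by simp [hxdef]
  have hxpos : ∀ l ∈ Set.Ioi (0 : ℝ), 0 < x l := by
    intro l hl
    have h1 : 0 < Real.arctan (Real.sinh (l / 2)) := by
      have := Real.arctan_strictMono (Real.sinh_pos_iff.mpr (by linarith [hl.out] : (0:ℝ) < l / 2))
      simpa using this
    have h2 : 0 < l * t := mul_pos hl.out ht
    simp only [hxdef]; linarith
  have hxcont : Continuous x := by
    simp only [hxdef]
    exact ((Real.continuous_arctan.comp (Real.continuous_sinh.comp (continuous_id.div_const 2)))).add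
      (continuous_id.mul continuous_const)
  have hxlim : Tendsto x (𝓝[>] (0 : ℝ)) (𝓝 0) := by
    have := hxcont.tendsto 0
    rw [hx0] at this
    exact this.mono_left nhdsWithin_le_nhds
  -- key identity on Ioi 0
  have hkey : ∀ l ∈ Set.Ioi (0 : ℝ), l * (collarT l - t) = π / 2 - x l := by
    intro l hl
    have hl0 : l ≠ 0 := ne_of_gt hl.out
    simp only [collarT, hxdef]
    field_simp
    ring
  -- first limit
  have hfirst : Tendsto (fun l : ℝ => Real.sin (l * (collarT l - t))) (𝓝[>] (0:ℝ)) (𝓝 1) := by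
    have hc : Tendsto (fun l : ℝ => Real.cos (x l)) (𝓝[>] (0:ℝ)) (𝓝 1) := by
      have := (Real.continuous_cos.tendsto 0).comp hxlim
      simpa [Function.comp_def] using this
    refine hc.congr' ?_
    filter_upwards [self_mem_nhdsWithin] with l hl
    rw [hkey l hl, Real.sin_pi_div_two_sub]
  refine ⟨hfirst, ?_⟩
  -- second limit
  have hxne : Tendsto x (𝓝[>] (0:ℝ)) (𝓝[≠] (0:ℝ)) := by
    rw [tendsto_nhdsWithin_iff]
    refine ⟨hxlim, ?_⟩
    filter_upwards [self_mem_nhdsWithin] with l hl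
    exact ne_of_gt (hxpos l hl)
  have hsin : Tendsto (fun l : ℝ => Real.sin (x l) / x l) (𝓝[>] (0:ℝ)) (𝓝 1) := by
    have hd : Tendsto (fun y : ℝ => Real.sin y / y) (𝓝[≠] (0:ℝ)) (𝓝 1) := by
      have := hasDerivAt_iff_tendsto_slope.mp (Real.hasDerivAt_sin 0)
      simp only [Real.cos_zero] at this
      refine this.congr ?_
      intro y
      simp [slope_def_field, div_eq_div_iff]
    exact hd.comp hxne
  have hslope : Tendsto (fun l : ℝ => x l / l) (𝓝[>] (0:ℝ)) (𝓝 (1/2 + t)) := by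
    have hd2 : HasDerivAt x (1/2 + t) 0 := by
      have h1 : HasDerivAt (fun l : ℝ => l / 2) (1/2) 0 := by
        simpa using (hasDerivAt_id (0:ℝ)).div_const 2
      have h2 : HasDerivAt Real.sinh (Real.cosh 0) (0/2 : ℝ) := by
        simpa using Real.hasDerivAt_sinh 0
      have h3 : HasDerivAt Real.arctan (1 / (1 + (0:ℝ)^2)) (Real.sinh (0/2)) := by
        simpa using Real.hasDerivAt_arctan 0
      have h4 := (h3.comp 0 (h2.comp 0 h1))
      have h5 : HasDerivAt (fun l : ℝ => l * t) t 0 := by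
        simpa using (hasDerivAt_id (0:ℝ)).mul_const t
      have h6 := h4.add h5
      simp only [Real.cosh_zero] at h6
      have e : x = (Real.arctan ∘ Real.sinh ∘ fun l : ℝ => l / 2) + fun l : ℝ => l * t := by
        funext l; simp [hxdef]
      have e2 : (1/2 + t : ℝ) = 1 / (1 + (0:ℝ) ^ 2) * (1 * (1 / 2)) + t := by norm_num
      rw [e, e2]; exact h6
    have := hasDerivAt_iff_tendsto_slope.mp hd2
    have h7 : Tendsto (slope x 0) (𝓝[>] (0:ℝ)) (𝓝 (1/2 + t)) :=
      this.mono_left (nhdsWithin_mono 0 (fun a ha => ne_of_gt ha))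
    refine h7.congr ?_
    intro l
    simp [slope_def_field, hx0]
  have hprod : Tendsto (fun l : ℝ => (x l / l) * (Real.sin (x l) / x l)) (𝓝[>] (0:ℝ))
      (𝓝 ((1/2 + t) * 1)) := hslope.mul hsin
  have hne : (1/2 + t) * 1 ≠ 0 := by positivity
  have hinv := hprod.inv₀ hne
  have : Tendsto (fun l : ℝ => l / Real.cos (l * (collarT l - t))) (𝓝[>] (0:ℝ))
      (𝓝 (((1/2 + t) * 1)⁻¹)) := by
    refine hinv.congr' ?_
    filter_upwards [self_mem_nhdsWithin] with l hl
    have hl0 : l ≠ 0 := ne_of_gt hl.out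
    have hx0' : x l ≠ 0 := ne_of_gt (hxpos l hl)
    rw [hkey l hl, Real.cos_pi_div_two_sub]
    rw [div_mul_div_comm, mul_comm l (x l), mul_div_mul_left _ _ hx0', inv_div]
  convert this using 2
  rw [mul_one, one_div]
  ring_nf
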